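/- Let X be a p×n real matrix whose columns are partitioned into τ groups of sizes n₁,…,n_τ (n = Σn_i), with group means x̄_i and k_{ni} = n_i/n. Let Φ = I_n − 1_n1_nᵀ/n, B = (1/n) Σ_{i=1}^τ Σ_{j=1}^{n_i} (x_{ij} − x̄_i)(x_{ij} − x̄_i)ᵀ, Û = (√k_{n1} x̄₁, …, √k_{nτ} x̄_τ) (p×τ), and N_n the τ×τ matrix with diagonal entries 1 − k_{ni} and (i,j) off-diagonal entries −√(k_{ni}k_{nj}). Then (1/n) X Φ Xᵀ = B + Û N_n Ûᵀ, and for any real λ̃ ≠ 0 that is not an eigenvalue of B, λ̃ is an eigenvalue of (1/n) X Φ Xᵀ if and only if det( I_τ + N_n Ûᵀ (B − λ̃ I_p)^{−1} Û N_n ) = 0. -/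

import Mathlib

open Matrix

namespace RSCM

noncomputable section

/-- The centering projection Φ = I − 1 1ᵀ/n. -/
def phiMat (n : ℕ) : Matrix (Fin n) (Fin n) ℝ :=
  1 - (n : ℝ)⁻¹ • Matrix.of (fun _ _ => (1 : ℝ))

/-- Group-mean decomposition of the sample covariance matrix and
the determinant criterion for its eigenvalues: `(1/n) X Φ Xᵀ = B + Û N Ûᵀ`, and a
real `λ̃ ≠ 0` which is not an eigenvalue of `B` is an eigenvalue of `(1/n) X Φ Xᵀ`
iff `det(I_τ + N Ûᵀ (B − λ̃ I)⁻¹ Û N) = 0`. -/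
theorem covariance_decomposition_det_criterion
    {p n τ : ℕ} (hτ : 1 ≤ τ)
    (X : Matrix (Fin p) (Fin n) ℝ) (grp : Fin n → Fin τ) (ni : Fin τ → ℕ)
    (hgrp : ∀ i, (Finset.univ.filter fun j : Fin n => grp j = i).card = ni i)
    (hni : ∀ i, 1 ≤ ni i) (hsum : ∑ i, ni i = n) :
    let xbar : Fin τ → Fin p → ℝ := fun i q =>
      (ni i : ℝ)⁻¹ * ∑ j ∈ Finset.univ.filter (fun j : Fin n => grp j = i), X q j
    let B : Matrix (Fin p) (Fin p) ℝ :=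
      (n : ℝ)⁻¹ • ∑ j : Fin n,
        Matrix.vecMulVec (fun q => X q j - xbar (grp j) q) (fun q => X q j - xbar (grp j) q)
    let U : Matrix (Fin p) (Fin τ) ℝ :=
      Matrix.of fun q i => Real.sqrt ((ni i : ℝ) / n) * xbar i q
    let N : Matrix (Fin τ) (Fin τ) ℝ :=
      Matrix.of fun i j =>
        if i = j then 1 - (ni i : ℝ) / n
        else -Real.sqrt (((ni i : ℝ) / n) * ((ni j : ℝ) / n))
    ((n : ℝ)⁻¹ • (X * phiMat n * Xᵀ) = B + U * N * Uᵀ) ∧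
    ∀ lam : ℝ, lam ≠ 0 → (B - lam • 1).det ≠ 0 →
      (((n : ℝ)⁻¹ • (X * phiMat n * Xᵀ) - lam • (1 : Matrix (Fin p) (Fin p) ℝ)).det = 0 ↔
        ((1 : Matrix (Fin τ) (Fin τ) ℝ) + N * Uᵀ * (B - lam • 1)⁻¹ * U * N).det = 0) := by
  intro xbar B U N
  -- basic positivity facts
  have hnpos : 0 < n := by
    have h1 : τ ≤ ∑ i, ni i := by
      calc τ = ∑ _i : Fin τ, 1 := by simp
        _ ≤ ∑ i, ni i := Finset.sum_le_sum fun i _ => hni i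
    omega
  have hn0 : (n : ℝ) ≠ 0 := Nat.cast_ne_zero.mpr hnpos.ne'
  have hni0 : ∀ i, (ni i : ℝ) ≠ 0 := fun i => Nat.cast_ne_zero.mpr (by have := hni i; omega)
  have hk0 : ∀ i, (0:ℝ) ≤ (ni i : ℝ) / n := fun i => by positivity
  set v : Fin τ → ℝ := fun i => Real.sqrt ((ni i : ℝ) / n) with hv
  have hv2 : ∀ i, v i * v i = (ni i : ℝ) / n := fun i => Real.mul_self_sqrt (hk0 i)
  have hksum : ∑ i, (ni i : ℝ) / n = 1 := by
    rw [← Finset.sum_div, ← Nat.cast_sum, hsum, div_self hn0]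
  have hNv : N = 1 - Matrix.vecMulVec v v := by
    ext i j
    by_cases h : i = j
    · subst h
      simp [N, Matrix.vecMulVec_apply, hv2, Matrix.one_apply]
    · simp [N, Matrix.vecMulVec_apply, h, Matrix.one_apply, hv,
        Real.sqrt_mul (hk0 i)]
  -- fiberwise sum lemma
  have fib : ∀ f : Fin n → ℝ,
      ∑ i, ∑ j ∈ Finset.univ.filter (fun j => grp j = i), f j = ∑ j, f j :=
    fun f => Finset.sum_fiberwise_of_maps_to (fun j _ => Finset.mem_univ (grp j)) f
  set A : Fin τ → Fin p → ℝ := fun i q =>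
    ∑ j ∈ Finset.univ.filter (fun j : Fin n => grp j = i), X q j with hA
  have hxbar : ∀ i q, xbar i q = (ni i : ℝ)⁻¹ * A i q := fun i q => rfl
  have hS : ∀ q, ∑ j, X q j = ∑ i, A i q := fun q => (fib _).symm
  -- the decomposition
  have hdec : (n : ℝ)⁻¹ • (X * phiMat n * Xᵀ) = B + U * N * Uᵀ := by
    ext q r
    -- LHS entry
    have hL : (X * phiMat n * Xᵀ) q r =
        (∑ j, X q j * X r j) - (n:ℝ)⁻¹ * ((∑ j, X q j) * (∑ j, X r j)) := by
      have h1 : ∀ c, (X * phiMat n) q c = X q c - (n:ℝ)⁻¹ * ∑ j, X q j := by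
        intro c
        simp only [Matrix.mul_apply, phiMat, Matrix.sub_apply, Matrix.one_apply,
          Matrix.smul_apply, Matrix.of_apply, mul_sub, Finset.sum_sub_distrib,
          smul_eq_mul, mul_one, mul_ite, mul_zero, Finset.sum_ite_eq',
          Finset.mem_univ, if_true]
        rw [← Finset.sum_mul]
        ring
      simp only [Matrix.mul_apply, h1, Matrix.transpose_apply, sub_mul,
        Finset.sum_sub_distrib, ← Finset.sum_mul, ← Finset.mul_sum]
      ring
    -- B entry
    have hB : B q r = (n:ℝ)⁻¹ * ((∑ j, X q j * X r j) - ∑ i, (ni i : ℝ)⁻¹ * (A i q * A i r)) := by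
      have h2 : ∑ j, (X q j - xbar (grp j) q) * (X r j - xbar (grp j) r)
          = (∑ j, X q j * X r j) - ∑ i, (ni i : ℝ)⁻¹ * (A i q * A i r) := by
        rw [← fib (fun j => (X q j - xbar (grp j) q) * (X r j - xbar (grp j) r)),
            ← fib (fun j => X q j * X r j), ← Finset.sum_sub_distrib]
        refine Finset.sum_congr rfl fun i _ => ?_
        have hcongr : ∑ j ∈ Finset.univ.filter (fun j => grp j = i),
            (X q j - xbar (grp j) q) * (X r j - xbar (grp j) r)
            = ∑ j ∈ Finset.univ.filter (fun j => grp j = i),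
            (X q j - xbar i q) * (X r j - xbar i r) := by
          refine Finset.sum_congr rfl fun j hj => ?_
          rw [(Finset.mem_filter.mp hj).2]
        rw [hcongr]
        simp only [sub_mul, mul_sub, Finset.sum_sub_distrib, ← Finset.mul_sum,
          ← Finset.sum_mul, Finset.sum_const, hgrp i, hxbar, nsmul_eq_mul, ← hA]
        field_simp [hni0 i]
        simp only [hA]
        ring
      simp only [B, Matrix.smul_apply, Matrix.sum_apply, Matrix.vecMulVec_apply,
        smul_eq_mul, h2]
    -- U Uᵀ entry
    have hUU : (U * Uᵀ) q r = ∑ i, ((ni i : ℝ) / n) * (xbar i q * xbar i r) := by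
      simp only [Matrix.mul_apply, Matrix.transpose_apply]
      refine Finset.sum_congr rfl fun i _ => ?_
      show (v i * xbar i q) * (v i * xbar i r) = _
      rw [← hv2 i]; ring
    -- U (v vᵀ) Uᵀ entry
    have e1 : ∀ i : Fin τ, U q i * v i = ((ni i:ℝ)/n) * xbar i q := fun i => by
      show (v i * xbar i q) * v i = _
      rw [← hv2 i]; ring
    have e2 : ∀ i : Fin τ, v i * U r i = ((ni i:ℝ)/n) * xbar i r := fun i => by
      show v i * (v i * xbar i r) = _
      rw [← hv2 i]; ring
    have hUv : (U * Matrix.vecMulVec v v * Uᵀ) q r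
        = (∑ i, ((ni i:ℝ)/n) * xbar i q) * (∑ i, ((ni i:ℝ)/n) * xbar i r) := by
      calc (U * Matrix.vecMulVec v v * Uᵀ) q r
          = ∑ l, (∑ i, U q i * v i * v l) * U r l := by
            simp only [Matrix.mul_apply, Matrix.vecMulVec_apply,
              Matrix.transpose_apply, mul_assoc]
        _ = ∑ l, (∑ i, U q i * v i) * (v l * U r l) := by
            refine Finset.sum_congr rfl fun l _ => ?_
            rw [← Finset.sum_mul]
            ring
        _ = (∑ i, U q i * v i) * (∑ l, v l * U r l) := by rw [← Finset.mul_sum]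
        _ = _ := by simp only [e1, e2]
    have hUNU : (U * N * Uᵀ) q r = (∑ i, ((ni i : ℝ) / n) * (xbar i q * xbar i r))
        - (∑ i, ((ni i:ℝ)/n) * xbar i q) * (∑ i, ((ni i:ℝ)/n) * xbar i r) := by
      rw [hNv, Matrix.mul_sub, Matrix.mul_one, Matrix.sub_mul, Matrix.sub_apply,
        hUU, hUv]
    -- scalar identities
    have e3 : ∀ i : Fin τ, ((ni i:ℝ)/n) * (xbar i q * xbar i r)
        = (n:ℝ)⁻¹ * ((ni i:ℝ)⁻¹ * (A i q * A i r)) := by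
      intro i
      rw [hxbar, hxbar]
      field_simp [hni0 i]
    have e4 : ∀ s : Fin p, ∑ i, ((ni i:ℝ)/n) * xbar i s = (n:ℝ)⁻¹ * ∑ j, X s j := by
      intro s
      rw [hS, Finset.mul_sum]
      refine Finset.sum_congr rfl fun i _ => ?_
      rw [hxbar]
      field_simp [hni0 i]
    show (n:ℝ)⁻¹ * (X * phiMat n * Xᵀ) q r = B q r + (U * N * Uᵀ) q r
    rw [hL, hB, hUNU, e4, e4]
    simp only [e3]
    rw [← Finset.mul_sum]
    ring
  refine ⟨hdec, fun lam _ hMdet => ?_⟩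
  -- Part 2
  have hNN : N * N = N := by
    have hvv : Matrix.vecMulVec v v * Matrix.vecMulVec v v = Matrix.vecMulVec v v := by
      ext i j
      simp only [Matrix.mul_apply, Matrix.vecMulVec_apply]
      calc ∑ l, v i * v l * (v l * v j) = (∑ l, (ni l : ℝ)/n) * (v i * v j) := by
            rw [Finset.sum_mul]
            exact Finset.sum_congr rfl fun l _ => by rw [← hv2 l]; ring
        _ = v i * v j := by rw [hksum, one_mul]
    rw [hNv]
    calc (1 - Matrix.vecMulVec v v) * (1 - Matrix.vecMulVec v v)
        = 1 - Matrix.vecMulVec v v - Matrix.vecMulVec v v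
          + Matrix.vecMulVec v v * Matrix.vecMulVec v v := by noncomm_ring
      _ = 1 - Matrix.vecMulVec v v := by rw [hvv]; abel
  set M := B - lam • (1 : Matrix (Fin p) (Fin p) ℝ) with hM
  have hMM : M * M⁻¹ = 1 := Matrix.mul_nonsing_inv M (isUnit_iff_ne_zero.mpr hMdet)
  have hSl : (n:ℝ)⁻¹ • (X * phiMat n * Xᵀ) - lam • (1 : Matrix (Fin p) (Fin p) ℝ)
      = M + U * N * Uᵀ := by
    rw [hdec, hM]; abel
  have h1 : M * (1 + (M⁻¹ * (U * N)) * (N * Uᵀ)) = M + U * N * Uᵀ := by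
    rw [Matrix.mul_add, Matrix.mul_one]
    congr 1
    calc M * (M⁻¹ * (U * N) * (N * Uᵀ))
        = (M * M⁻¹) * ((U * N) * (N * Uᵀ)) := by simp only [Matrix.mul_assoc]
      _ = (U * N) * (N * Uᵀ) := by rw [hMM, Matrix.one_mul]
      _ = U * N * Uᵀ := by
          rw [Matrix.mul_assoc, ← Matrix.mul_assoc N N, hNN, ← Matrix.mul_assoc]
  have h2 : ((1 : Matrix (Fin τ) (Fin τ) ℝ) + N * Uᵀ * M⁻¹ * U * N)
      = 1 + (N * Uᵀ) * (M⁻¹ * (U * N)) := by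
    simp only [Matrix.mul_assoc]
  rw [hSl, ← h1, Matrix.det_mul, h2,
    ← Matrix.det_one_add_mul_comm (M⁻¹ * (U * N)) (N * Uᵀ)]
  constructor
  · intro h
    rcases mul_eq_zero.mp h with h' | h'
    · exact absurd h' hMdet
    · exact h'
  · intro h
    rw [h, mul_zero]

end

end RSCM
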